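/- arXiv:1001.5243 — 2 statements merged into one kernel-verified Lean document; each statement's English description precedes it below -/
import Mathlib

section
/- Let α, β ∈ V satisfy ⟨α,α⟩ < 0, ⟨β,β⟩ < 0 and ⟨α,β⟩ < 0, and assume there exists γ ∈ V with ⟨γ,γ⟩ > 0, ⟨γ,L⟩ > 0, ⟨α,γ⟩ ≤ 0 and ⟨β,γ⟩ ≥ 0. Then the following are equivalent: (i) there exist q ∈ Q̄ and t ≥ 0 with β = q + t·α; (ii) the equation ⟨tβ − α, tβ − α⟩ = 0 has a real solution t; (iii) every δ ∈ V with ⟨δ,δ⟩ ≥ 0, ⟨δ,L⟩ ≥ 0 and ⟨δ,β⟩ = 0 satisfies ⟨δ,α⟩ ≤ 0. -/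
open scoped BigOperators

/-- The Minkowski intersection form of signature (1,r) on `ℝ^{r+1}`:
`⟨u,v⟩ = u₀v₀ − u₁v₁ − ⋯ − u_r v_r`. -/
noncomputable def mform (r : ℕ) (u v : Fin (r + 1) → ℝ) : ℝ :=
  u 0 * v 0 - ∑ i : Fin r, u i.succ * v i.succ

/-- The class `L = (1,0,…,0)` of a line. -/
def lclass (r : ℕ) : Fin (r + 1) → ℝ := fun i => if i = 0 then 1 else 0

/-- The canonical class `K = (−3,1,…,1)`. -/
def kclass (r : ℕ) : Fin (r + 1) → ℝ := fun i => if i = 0 then -3 else 1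

/-- `Q = {α : ⟨α,α⟩ ≥ 0, ⟨α,L⟩ > 0}`. -/
def Qset (r : ℕ) : Set (Fin (r + 1) → ℝ) :=
  {α | 0 ≤ mform r α α ∧ 0 < mform r α (lclass r)}

/-- `Q̄ = {α : ⟨α,α⟩ ≥ 0, ⟨α,L⟩ ≥ 0}`. -/
def Qbar (r : ℕ) : Set (Fin (r + 1) → ℝ) :=
  {α | 0 ≤ mform r α α ∧ 0 ≤ mform r α (lclass r)}

lemma mform_comm (r : ℕ) (u v : Fin (r+1) → ℝ) : mform r u v = mform r v u := by
  simp [mform, mul_comm]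

lemma mform_add_left (r : ℕ) (u v w : Fin (r+1) → ℝ) :
    mform r (u + v) w = mform r u w + mform r v w := by
  simp [mform, add_mul, Finset.sum_add_distrib]; ring

lemma mform_smul_left (r : ℕ) (c : ℝ) (u w : Fin (r+1) → ℝ) :
    mform r (c • u) w = c * mform r u w := by
  simp only [mform, Pi.smul_apply, smul_eq_mul, mul_sub, Finset.mul_sum]
  ring_nf

lemma mform_neg_left (r : ℕ) (u w : Fin (r+1) → ℝ) :
    mform r (-u) w = - mform r u w := by
  simp [mform, Finset.sum_neg_distrib]; ring

lemma mform_sub_left (r : ℕ) (u v w : Fin (r+1) → ℝ) :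
    mform r (u - v) w = mform r u w - mform r v w := by
  rw [sub_eq_add_neg, mform_add_left, mform_neg_left]; ring

lemma mform_add_right (r : ℕ) (u v w : Fin (r+1) → ℝ) :
    mform r u (v + w) = mform r u v + mform r u w := by
  rw [mform_comm, mform_add_left, mform_comm r v u, mform_comm r w u]

lemma mform_smul_right (r : ℕ) (c : ℝ) (u w : Fin (r+1) → ℝ) :
    mform r u (c • w) = c * mform r u w := by
  rw [mform_comm, mform_smul_left, mform_comm r w u]

lemma mform_neg_right (r : ℕ) (u w : Fin (r+1) → ℝ) :
    mform r u (-w) = - mform r u w := by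
  rw [mform_comm, mform_neg_left, mform_comm r w u]

lemma mform_sub_right (r : ℕ) (u v w : Fin (r+1) → ℝ) :
    mform r u (v - w) = mform r u v - mform r u w := by
  rw [mform_comm, mform_sub_left, mform_comm r v u, mform_comm r w u]

lemma mform_lclass (r : ℕ) (u : Fin (r+1) → ℝ) : mform r u (lclass r) = u 0 := by
  simp [mform, lclass, Fin.succ_ne_zero]

lemma cs_bound (n : ℕ) (f g : Fin n → ℝ) (a b : ℝ) (ha : 0 ≤ a) (hb : 0 ≤ b)
    (hf : ∑ i, f i ^ 2 ≤ a ^ 2) (hg : ∑ i, g i ^ 2 ≤ b ^ 2) :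
    ∑ i, f i * g i ≤ a * b := by
  have h1 := Finset.sum_mul_sq_le_sq_mul_sq Finset.univ f g
  have h2 : (∑ i, f i ^ 2) * (∑ i, g i ^ 2) ≤ a ^ 2 * b ^ 2 := by
    have hg0 : (0:ℝ) ≤ ∑ i, g i ^ 2 := Finset.sum_nonneg fun i _ => sq_nonneg _
    have ha2 : (0:ℝ) ≤ a ^ 2 := sq_nonneg a
    exact mul_le_mul hf hg hg0 ha2
  nlinarith [mul_nonneg ha hb]

lemma mform_eq (r : ℕ) (u v : Fin (r+1) → ℝ) :
    mform r u v = u 0 * v 0 - ∑ i : Fin r, u i.succ * v i.succ := rfl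

lemma sum_sq_le (r : ℕ) (u : Fin (r+1) → ℝ) (h : 0 ≤ mform r u u) :
    ∑ i : Fin r, (u i.succ) ^ 2 ≤ (u 0) ^ 2 := by
  rw [mform_eq] at h
  have : ∑ i : Fin r, u i.succ * u i.succ = ∑ i : Fin r, (u i.succ) ^ 2 := by
    apply Finset.sum_congr rfl; intro i _; ring
  nlinarith [h]

lemma pair_nonneg (r : ℕ) (u v : Fin (r+1) → ℝ)
    (hu : 0 ≤ mform r u u) (hu0 : 0 ≤ u 0)
    (hv : 0 ≤ mform r v v) (hv0 : 0 ≤ v 0) : 0 ≤ mform r u v := by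
  have hcs := cs_bound r (fun i => u i.succ) (fun i => v i.succ) (u 0) (v 0)
    hu0 hv0 (sum_sq_le r u hu) (sum_sq_le r v hv)
  rw [mform_eq]; linarith

lemma first_nonneg (r : ℕ) (q γ : Fin (r+1) → ℝ)
    (hq : 0 ≤ mform r q q) (hγ : 0 < mform r γ γ) (hγ0 : 0 < γ 0)
    (hpair : 0 ≤ mform r q γ) : 0 ≤ q 0 := by
  by_contra hneg
  push_neg at hneg
  set t := Real.sqrt (∑ i : Fin r, (γ i.succ) ^ 2) with ht
  have hsumγ : (0:ℝ) ≤ ∑ i : Fin r, (γ i.succ) ^ 2 :=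
    Finset.sum_nonneg fun i _ => sq_nonneg _
  have ht0 : 0 ≤ t := Real.sqrt_nonneg _
  have ht2 : t ^ 2 = ∑ i : Fin r, (γ i.succ) ^ 2 := Real.sq_sqrt hsumγ
  have hγsum : ∑ i : Fin r, (γ i.succ) ^ 2 < (γ 0) ^ 2 := by
    rw [mform_eq] at hγ
    have : ∑ i : Fin r, γ i.succ * γ i.succ = ∑ i : Fin r, (γ i.succ) ^ 2 := by
      apply Finset.sum_congr rfl; intro i _; ring
    nlinarith
  have htγ : t < γ 0 := by nlinarith
  have hcs := cs_bound r (fun i => -(q i.succ)) (fun i => γ i.succ) (-(q 0)) t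
    (by linarith) ht0 (by simpa [neg_pow] using sum_sq_le r q hq) (le_of_eq ht2.symm)
  simp only [neg_mul, Finset.sum_neg_distrib] at hcs
  rw [mform_eq] at hpair
  nlinarith


lemma alg_root_ge (t A B C : ℝ) (h : t^2*C - 2*t*B + A = 0) : 0 ≤ B^2 - A*C := by
  have key : B^2 - A*C = (t*C - B)^2 - C*(t^2*C - 2*t*B + A) := by ring
  rw [key, h, mul_zero, sub_zero]
  positivity

lemma alg_root_ge' (t A B C : ℝ) (hA : A < 0) (h : 0 ≤ t^2*A - 2*t*B + C) :
    0 ≤ B^2 - A*C := by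
  have key : B^2 - A*C = (t*A - B)^2 + (-A)*(t^2*A - 2*t*B + C) := by ring
  rw [key]
  have h2 := mul_nonneg (neg_nonneg.mpr hA.le) h
  nlinarith [sq_nonneg (t*A - B)]

lemma alg_root_eq (s A B C : ℝ) (hC : C ≠ 0) (hs : s^2 = B^2 - A*C) :
    ((B+s)/C)^2 * C - 2*((B+s)/C)*B + A = 0 := by
  field_simp
  linear_combination hs

lemma alg_root_eq' (s A B C : ℝ) (hA : A ≠ 0) (hs : s^2 = B^2 - A*C) :
    ((B+s)/A)^2 * A - 2*((B+s)/A)*B + C = 0 := by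
  field_simp
  linear_combination hs

lemma alg_sqrt_le (s A B C : ℝ) (hA : A < 0) (hC : C < 0) (hB : B < 0)
    (hs0 : 0 ≤ s) (hs2 : s^2 = B^2 - A*C) : s ≤ -B := by
  nlinarith [mul_pos (neg_pos.mpr hA) (neg_pos.mpr hC)]

lemma alg_num (A B C E F : ℝ) (hA : A < 0) (h : B^2 < A*C) :
    C*E^2 - 2*B*E*F + A*F^2 ≤ 0 := by
  nlinarith [sq_nonneg (A*F - B*E),
    mul_nonneg (sq_nonneg E) (by linarith : (0:ℝ) ≤ A*C - B^2)]

lemma alg_eps_sq (x y : ℝ) (hx : 0 ≤ x) (h0 : 0 ≤ min (Real.sqrt x) y) :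
    (min (Real.sqrt x) y)^2 ≤ x := by
  have h1 := min_le_left (Real.sqrt x) y
  nlinarith [Real.sq_sqrt hx, Real.sqrt_nonneg x]

set_option maxHeartbeats 1000000 in
theorem stmt0 (r : ℕ) (hr : 1 ≤ r) (α β γ : Fin (r + 1) → ℝ)
    (hαα : mform r α α < 0) (hββ : mform r β β < 0) (hαβ : mform r α β < 0)
    (hγγ : 0 < mform r γ γ) (hγL : 0 < mform r γ (lclass r))
    (hαγ : mform r α γ ≤ 0) (hβγ : 0 ≤ mform r β γ) :
    ((∃ q ∈ Qbar r, ∃ t : ℝ, 0 ≤ t ∧ β = q + t • α) ↔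
      (∃ t : ℝ, mform r (t • β - α) (t • β - α) = 0)) ∧
    ((∃ t : ℝ, mform r (t • β - α) (t • β - α) = 0) ↔
      (∀ δ : Fin (r + 1) → ℝ, 0 ≤ mform r δ δ → 0 ≤ mform r δ (lclass r) →
        mform r δ β = 0 → mform r δ α ≤ 0)) := by
  have hγ0 : 0 < γ 0 := by rw [← mform_lclass r γ]; exact hγL
  set A := mform r α α with hAdef
  set C := mform r β β with hCdef
  set B := mform r α β with hBdef
  set D := B ^ 2 - A * C with hDdef
  have key1 : ∀ t : ℝ, mform r (t • β - α) (t • β - α)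
      = t ^ 2 * C - 2 * t * B + A := by
    intro t
    simp only [mform_sub_left, mform_sub_right, mform_smul_left, mform_smul_right,
      mform_comm r β α, ← hAdef, ← hCdef, ← hBdef]
    ring
  have key2 : ∀ t : ℝ, mform r (β - t • α) (β - t • α)
      = t ^ 2 * A - 2 * t * B + C := by
    intro t
    simp only [mform_sub_left, mform_sub_right, mform_smul_left, mform_smul_right,
      mform_comm r β α, ← hAdef, ← hCdef, ← hBdef]
    ring
  -- (ii) ↔ 0 ≤ D
  have hP2 : (∃ t : ℝ, mform r (t • β - α) (t • β - α) = 0) ↔ 0 ≤ D := by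
    constructor
    · rintro ⟨t, ht⟩
      rw [key1] at ht
      rw [hDdef]
      exact alg_root_ge t A B C ht
    · intro hD
      refine ⟨(B + Real.sqrt D) / C, ?_⟩
      rw [key1]
      exact alg_root_eq (Real.sqrt D) A B C (ne_of_lt hββ)
        (by rw [Real.sq_sqrt hD, hDdef])
  -- (i) → 0 ≤ D
  have h3 : (∃ q ∈ Qbar r, ∃ t : ℝ, 0 ≤ t ∧ β = q + t • α) → 0 ≤ D := by
    rintro ⟨q, ⟨hqq, hqL⟩, t, ht, hβeq⟩
    have hqdef : β - t • α = q := by rw [hβeq]; abel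
    have h := key2 t
    rw [hqdef] at h
    rw [hDdef]
    exact alg_root_ge' t A B C hαα (by rw [← h]; exact hqq)
  -- 0 ≤ D → (i)
  have h2 : 0 ≤ D → (∃ q ∈ Qbar r, ∃ t : ℝ, 0 ≤ t ∧ β = q + t • α) := by
    intro hD
    have hs2 : Real.sqrt D ^ 2 = D := Real.sq_sqrt hD
    have hs0 : 0 ≤ Real.sqrt D := Real.sqrt_nonneg _
    have hsB : Real.sqrt D ≤ -B :=
      alg_sqrt_le (Real.sqrt D) A B C hαα hββ hαβ hs0 (by rw [hs2, hDdef])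
    set t := (B + Real.sqrt D) / A with htdef
    have htnn : 0 ≤ t := by
      rw [htdef, div_nonneg_iff]; right
      constructor <;> linarith
    have hroot : t ^ 2 * A - 2 * t * B + C = 0 := by
      rw [htdef]
      exact alg_root_eq' (Real.sqrt D) A B C (ne_of_lt hαα) (by rw [hs2, hDdef])
    have hqq : mform r (β - t • α) (β - t • α) = 0 := by rw [key2]; exact hroot
    have hqγ : 0 ≤ mform r (β - t • α) γ := by
      rw [mform_sub_left, mform_smul_left]
      have := mul_nonneg htnn (neg_nonneg.mpr hαγ)
      linarith [hβγ]
    have hq0 : 0 ≤ (β - t • α) 0 :=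
      first_nonneg r _ γ (le_of_eq hqq.symm) hγγ hγ0 hqγ
    refine ⟨β - t • α, ⟨le_of_eq hqq.symm, ?_⟩, t, htnn, ?_⟩
    · rw [mform_lclass]; exact hq0
    · abel
  -- 0 ≤ D → (iii)
  have h4 : 0 ≤ D → (∀ δ : Fin (r + 1) → ℝ, 0 ≤ mform r δ δ →
      0 ≤ mform r δ (lclass r) → mform r δ β = 0 → mform r δ α ≤ 0) := by
    intro hD δ hδδ hδL hδβ
    obtain ⟨q, ⟨hqq, hqL⟩, t, ht, hβeq⟩ := h2 hD
    have htpos : 0 < t := by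
      rcases lt_or_eq_of_le ht with h | h
      · exact h
      · exfalso
        have hβq : β = q := by rw [hβeq, ← h, zero_smul, add_zero]
        rw [hCdef, hβq] at hββ
        linarith
    have hδ0 : 0 ≤ δ 0 := by rw [← mform_lclass r δ]; exact hδL
    have hq0 : 0 ≤ q 0 := by rw [← mform_lclass r q]; exact hqL
    have hpair : 0 ≤ mform r δ q := pair_nonneg r δ q hδδ hδ0 hqq hq0
    have hexp : mform r δ β = mform r δ q + t * mform r δ α := by
      rw [hβeq, mform_add_right, mform_smul_right]
    by_contra hpos
    push_neg at hpos
    linarith [mul_pos htpos hpos, hpair, hexp, hδβ]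
  -- (iii) → 0 ≤ D
  have h5 : (∀ δ : Fin (r + 1) → ℝ, 0 ≤ mform r δ δ →
      0 ≤ mform r δ (lclass r) → mform r δ β = 0 → mform r δ α ≤ 0) → 0 ≤ D := by
    intro hIII
    by_contra hD
    push_neg at hD
    have hBAC : B ^ 2 < A * C := by
      have := hDdef
      linarith
    set G := A * C - B ^ 2 with hGdef
    have hG : 0 < G := by rw [hGdef]; linarith
    set E := mform r α γ with hEdef
    set F := mform r β γ with hFdef
    set a := (E * C - F * B) / G with hadef
    set b := (A * F - B * E) / G with hbdef
    set δ0 := γ - a • α - b • β with hδ0def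
    have hδ0α : mform r δ0 α = 0 := by
      rw [hδ0def]
      simp only [mform_sub_left, mform_smul_left, mform_comm r γ α, mform_comm r β α,
        ← hAdef, ← hBdef, ← hEdef]
      rw [hadef, hbdef]
      field_simp
      ring
    have hδ0β : mform r δ0 β = 0 := by
      rw [hδ0def]
      simp only [mform_sub_left, mform_smul_left, mform_comm r γ β,
        ← hCdef, ← hBdef, ← hFdef]
      rw [hadef, hbdef]
      field_simp
      ring
    have hδ0γ : mform r δ0 γ = mform r γ γ - a * E - b * F := by
      rw [hδ0def]
      simp only [mform_sub_left, mform_smul_left, ← hEdef, ← hFdef]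
    have hNum : C * E ^ 2 - 2 * B * E * F + A * F ^ 2 ≤ 0 :=
      alg_num A B C E F hαα hBAC
    have hab : a * E + b * F ≤ 0 := by
      have heq : a * E + b * F = (C * E ^ 2 - 2 * B * E * F + A * F ^ 2) / G := by
        rw [hadef, hbdef]; field_simp; ring
      rw [heq]
      exact div_nonpos_of_nonpos_of_nonneg hNum hG.le
    have hδ0pos : 0 < mform r δ0 δ0 := by
      have hexp : mform r δ0 δ0 = mform r δ0 γ - a * mform r δ0 α - b * mform r δ0 β := by
        nth_rewrite 2 [hδ0def]
        rw [mform_sub_right, mform_sub_right, mform_smul_right, mform_smul_right]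
      rw [hexp, hδ0α, hδ0β, hδ0γ]
      have : 0 < mform r γ γ := hγγ
      linarith
    have hδ0_0ne : δ0 0 ≠ 0 := by
      intro h0
      have hle : mform r δ0 δ0 ≤ 0 := by
        rw [mform_eq, h0]
        have : (0:ℝ) ≤ ∑ i : Fin r, δ0 i.succ * δ0 i.succ :=
          Finset.sum_nonneg fun i _ => mul_self_nonneg _
        linarith
      linarith
    obtain ⟨δ1, h1α, h1β, h1pos, h10⟩ : ∃ δ1 : Fin (r+1) → ℝ,
        mform r δ1 α = 0 ∧ mform r δ1 β = 0 ∧ 0 < mform r δ1 δ1 ∧ 0 < δ1 0 := by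
      rcases hδ0_0ne.lt_or_gt with h | h
      · refine ⟨-δ0, ?_, ?_, ?_, ?_⟩
        · rw [mform_neg_left, hδ0α, neg_zero]
        · rw [mform_neg_left, hδ0β, neg_zero]
        · rw [mform_neg_left, mform_neg_right, neg_neg]; exact hδ0pos
        · simp only [Pi.neg_apply]; linarith
      · exact ⟨δ0, hδ0α, hδ0β, hδ0pos, h⟩
    set w := (B / C) • β - α with hwdef
    have hC0 : C ≠ 0 := ne_of_lt hββ
    have hwβ : mform r w β = 0 := by
      rw [hwdef, mform_sub_left, mform_smul_left]
      rw [← hCdef, ← hBdef]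
      field_simp
      ring
    have hwα : mform r w α = (B ^ 2 - A * C) / C := by
      rw [hwdef, mform_sub_left, mform_smul_left, mform_comm r β α]
      rw [← hAdef, ← hBdef]
      field_simp
    have hwαpos : 0 < mform r w α := by
      rw [hwα, div_pos_iff]
      right
      exact ⟨by linarith, hββ⟩
    have hww : mform r w w = - mform r w α := by
      nth_rewrite 2 [hwdef]
      rw [mform_sub_right, mform_smul_right, hwβ]
      ring
    have hwwneg : mform r w w < 0 := by rw [hww]; linarith
    have h1w : mform r δ1 w = 0 := by
      rw [hwdef, mform_sub_right, mform_smul_right, h1β, h1α]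
      ring
    set N := mform r δ1 δ1 with hNdef
    set W := mform r w w with hWdef
    set wL := w 0 with hwLdef
    have hWpos : 0 < -W := by linarith
    have hNW : 0 < N / (-W) := div_pos h1pos hWpos
    set ε := min (Real.sqrt (N / (-W))) (δ1 0 / (1 + |wL|)) with hεdef
    have hεpos : 0 < ε :=
      lt_min (Real.sqrt_pos.mpr hNW) (div_pos h10 (by positivity))
    have hε1 : ε ^ 2 ≤ N / (-W) := by
      rw [hεdef]
      exact alg_eps_sq (N / (-W)) (δ1 0 / (1 + |wL|)) hNW.le (by rw [← hεdef]; exact hεpos.le)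
    have hε2 : ε * (1 + |wL|) ≤ δ1 0 := by
      have h := min_le_right (Real.sqrt (N / (-W))) (δ1 0 / (1 + |wL|))
      have hd : (0:ℝ) < 1 + |wL| := by positivity
      rw [← hεdef] at h
      exact (le_div_iff₀ hd).mp h
    set δ := δ1 + ε • w with hδdef
    have hδβ2 : mform r δ β = 0 := by
      rw [hδdef, mform_add_left, mform_smul_left, h1β, hwβ]
      ring
    have hδδ2 : 0 ≤ mform r δ δ := by
      have hexp : mform r δ δ = N + ε ^ 2 * W := by
        rw [hδdef]
        simp only [mform_add_left, mform_add_right, mform_smul_left, mform_smul_right]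
        rw [mform_comm r w δ1, h1w, ← hNdef, ← hWdef]
        ring
      rw [hexp]
      have hb : ε ^ 2 * (-W) ≤ N := (le_div_iff₀ hWpos).mp hε1
      linarith
    have hδL2 : 0 ≤ mform r δ (lclass r) := by
      rw [mform_lclass, hδdef]
      simp only [Pi.add_apply, Pi.smul_apply, smul_eq_mul]
      rw [← hwLdef]
      have h1 : ε * (-|wL|) ≤ ε * wL :=
        mul_le_mul_of_nonneg_left (neg_abs_le wL) hεpos.le
      linarith [hε2, hεpos.le]
    have hδαpos : 0 < mform r δ α := by
      rw [hδdef, mform_add_left, mform_smul_left, h1α, zero_add]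
      exact mul_pos hεpos hwαpos
    have := hIII δ hδδ2 hδL2 hδβ2
    linarith
  exact ⟨⟨fun h => hP2.mpr (h3 h), fun h => h2 (hP2.mp h)⟩,
    ⟨fun h => h4 (hP2.mp h), fun h => hP2.mpr (h5 h)⟩⟩
end

section
/- Assume r > 10 and let e be a (−1)-class. Then there exists δ ∈ V with ⟨δ,δ⟩ ≥ 0, ⟨δ,L⟩ > 0, ⟨δ,e⟩ = 0 and ⟨δ,K⟩ > 0; that is, the orthogonal complement of e meets Q in a class of strictly positive intersection with K (so e^⊥ ∩ Q is not contained in the half-space {⟨K,·⟩ ≤ 0}). -/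
open scoped BigOperators

theorem stmt11 (r : ℕ) (hr : 10 < r) (e : Fin (r + 1) → ℝ)
    (hee : mform r e e = -1) (heK : mform r e (kclass r) = -1)
    (heL : 0 ≤ mform r e (lclass r)) :
    ∃ δ : Fin (r + 1) → ℝ, 0 ≤ mform r δ δ ∧ 0 < mform r δ (lclass r) ∧
      mform r δ e = 0 ∧ 0 < mform r δ (kclass r) := by
  classical
  have hr' : (11 : ℝ) ≤ (r : ℝ) := by exact_mod_cast hr
  have hL0 : lclass r 0 = (1:ℝ) := by simp [lclass]
  have hK0 : kclass r 0 = (-3:ℝ) := by simp [kclass]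
  set d := e 0 with hd0
  have hd : 0 ≤ d := by
    simpa [mform, lclass, Fin.succ_ne_zero] using heL
  set S := ∑ i : Fin r, e i.succ with hS0
  set T := ∑ i : Fin r, e i.succ * e i.succ with hT0
  have hT : T = d * d + 1 := by
    have h := hee
    simp only [mform, ← hd0, ← hT0] at h
    linarith
  have hS : S = 1 - 3 * d := by
    have h := heK
    simp only [mform, kclass, Fin.succ_ne_zero, if_false, mul_one, ← hd0, ← hS0] at h
    simp only [show ((0 : Fin (r+1)) = 0) = True from by simp, if_true] at h
    linarith
  have h3d : (0:ℝ) < 3 + d := by linarith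
  set x : ℝ := ((r : ℝ) - 10 - 1/2) / (3 + d) with hx0
  have hx : x * (3 + d) = (r : ℝ) - 10 - 1/2 := by
    rw [hx0]; field_simp
  have hxpos : 0 ≤ x := div_nonneg (by linarith) h3d.le
  set z : ℝ := x * d + 1 with hz0
  refine ⟨fun i => x * lclass r i + (-1) * kclass r i + z * e i, ?_, ?_, ?_, ?_⟩
  · -- δ² ≥ 0
    have hsum : ∑ i : Fin r,
        (x * lclass r i.succ + (-1) * kclass r i.succ + z * e i.succ) *
        (x * lclass r i.succ + (-1) * kclass r i.succ + z * e i.succ)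
        = (r : ℝ) + (-(2*z)) * S + (z*z) * T := by
      have h1 : ∀ i : Fin r,
          (x * lclass r i.succ + (-1) * kclass r i.succ + z * e i.succ) *
          (x * lclass r i.succ + (-1) * kclass r i.succ + z * e i.succ)
          = 1 + (-(2*z)) * e i.succ + (z*z) * (e i.succ * e i.succ) := by
        intro i
        simp [lclass, kclass, Fin.succ_ne_zero]
        ring
      rw [Finset.sum_congr rfl fun i _ => h1 i, Finset.sum_add_distrib,
        Finset.sum_add_distrib, ← Finset.mul_sum, ← Finset.mul_sum]
      simp [hS0, hT0]
    simp only [mform, hsum, hL0, hK0, ← hd0]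
    have hkey : (x * 1 + (-1) * (-3) + z * d) * (x * 1 + (-1) * (-3) + z * d) -
        ((r : ℝ) + (-(2*z)) * S + (z*z) * T)
        = x*x + (x*d)*(x*d) + 2 * (x * (3 + d)) + 10 - (r:ℝ) := by
      rw [hz0, hS, hT]; ring
    rw [hkey]
    nlinarith [sq_nonneg x, sq_nonneg (x*d), hx, hr']
  · -- δ·L > 0
    have hsum : ∑ i : Fin r,
        (x * lclass r i.succ + (-1) * kclass r i.succ + z * e i.succ) *
        lclass r i.succ = 0 := by
      apply Finset.sum_eq_zero
      intro i _
      simp [lclass, Fin.succ_ne_zero]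
    simp only [mform, hsum, hL0, hK0, ← hd0, sub_zero]
    rw [hz0]
    nlinarith [mul_nonneg hxpos hd, mul_nonneg (mul_nonneg hxpos hd) hd]
  · -- δ·e = 0
    have hsum : ∑ i : Fin r,
        (x * lclass r i.succ + (-1) * kclass r i.succ + z * e i.succ) * e i.succ
        = -S + z * T := by
      have h1 : ∀ i : Fin r,
          (x * lclass r i.succ + (-1) * kclass r i.succ + z * e i.succ) * e i.succ
          = -(e i.succ) + z * (e i.succ * e i.succ) := by
        intro i
        simp [lclass, kclass, Fin.succ_ne_zero]
        ring
      rw [Finset.sum_congr rfl fun i _ => h1 i, Finset.sum_add_distrib,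
        ← Finset.mul_sum]
      simp [hS0, hT0]
    simp only [mform, hsum, hL0, hK0, ← hd0]
    rw [hz0, hS, hT]; ring
  · -- δ·K > 0
    have hsum : ∑ i : Fin r,
        (x * lclass r i.succ + (-1) * kclass r i.succ + z * e i.succ) *
        kclass r i.succ = -(r : ℝ) + z * S := by
      have h1 : ∀ i : Fin r,
          (x * lclass r i.succ + (-1) * kclass r i.succ + z * e i.succ) *
          kclass r i.succ = -1 + z * e i.succ := by
        intro i
        simp [lclass, kclass, Fin.succ_ne_zero]
      rw [Finset.sum_congr rfl fun i _ => h1 i, Finset.sum_add_distrib,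
        ← Finset.mul_sum]
      simp [hS0]
    simp only [mform, hsum, hL0, hK0, ← hd0]
    have hkey : (x * 1 + (-1) * (-3) + z * d) * (-3) - (-(r:ℝ) + z * S)
        = (r:ℝ) - 10 - x * (3 + d) := by
      rw [hz0, hS]; ring
    rw [hkey, hx]
    norm_num
end
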